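/- If p is a real polynomial of degree n with real coefficients, then the polynomial q_ω(X) = (i/2)^n · Σ p_k (-i)^k (X + 1)^k (X - 1)^{n-k} is self-adjoint, i.e., it satisfies q_ω(X) = Xⁿ·conj(q_ω)(1/X) formally (coefficients satisfy q_{n-k} = conj(q_k)). -/

import Mathlib

open Complex Polynomial

lemma reflect_sum' {ι : Type*} (N : ℕ) (s : Finset ι) (f : ι → ℂ[X]) :
    Polynomial.reflect N (∑ i ∈ s, f i) = ∑ i ∈ s, Polynomial.reflect N (f i) := by
  classical
  induction s using Finset.induction with
  | empty => simp [Polynomial.reflect_zero]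
  | insert _ _ h ih => simp [Finset.sum_insert h, Polynomial.reflect_add, ih]

lemma reflect_Xp1 : Polynomial.reflect 1 ((X : ℂ[X]) + 1) = X + 1 := by
  rw [Polynomial.reflect_add, ← pow_one (X : ℂ[X]), Polynomial.reflect_monomial]
  simp [Polynomial.reflect_C]
  ring

lemma reflect_Xm1 : Polynomial.reflect 1 ((X : ℂ[X]) - 1) = 1 - X := by
  rw [sub_eq_add_neg, Polynomial.reflect_add, ← pow_one (X : ℂ[X]), Polynomial.reflect_monomial]
  rw [← Polynomial.C_1, ← Polynomial.C_neg, Polynomial.reflect_C]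
  simp
  ring

lemma natDeg_Xp1_pow (k : ℕ) : (((X : ℂ[X]) + 1) ^ k).natDegree ≤ k := by
  calc (((X : ℂ[X]) + 1) ^ k).natDegree ≤ k * ((X : ℂ[X]) + 1).natDegree :=
        Polynomial.natDegree_pow_le
    _ ≤ k * 1 := by
        gcongr
        rw [← Polynomial.C_1]
        exact (Polynomial.natDegree_X_add_C _).le
    _ = k := mul_one k

lemma natDeg_Xm1_pow (k : ℕ) : (((X : ℂ[X]) - 1) ^ k).natDegree ≤ k := by
  calc (((X : ℂ[X]) - 1) ^ k).natDegree ≤ k * ((X : ℂ[X]) - 1).natDegree :=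
        Polynomial.natDegree_pow_le
    _ ≤ k * 1 := by
        gcongr
        rw [sub_eq_add_neg, ← Polynomial.C_1, ← Polynomial.C_neg]
        exact (Polynomial.natDegree_X_add_C _).le
    _ = k := mul_one k

lemma reflect_Xp1_pow (k : ℕ) :
    Polynomial.reflect k (((X : ℂ[X]) + 1) ^ k) = (X + 1) ^ k := by
  induction k with
  | zero => simp
  | succ k ih =>
    rw [pow_succ,
      Polynomial.reflect_mul _ _ (natDeg_Xp1_pow k) (by
        rw [← Polynomial.C_1]; exact (Polynomial.natDegree_X_add_C _).le),
      ih, reflect_Xp1, ← pow_succ]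

lemma reflect_Xm1_pow (k : ℕ) :
    Polynomial.reflect k (((X : ℂ[X]) - 1) ^ k) = (1 - X) ^ k := by
  induction k with
  | zero => simp
  | succ k ih =>
    rw [pow_succ,
      Polynomial.reflect_mul _ _ (natDeg_Xm1_pow k) (by
        rw [sub_eq_add_neg, ← Polynomial.C_1, ← Polynomial.C_neg]
        exact (Polynomial.natDegree_X_add_C _).le),
      ih, reflect_Xm1, ← pow_succ]

lemma scal (n k : ℕ) (hk : k ≤ n) (a : ℂ) :
    (I / 2) ^ n * (a * (-I) ^ k) * (-1 : ℂ) ^ (n - k) = (-I / 2) ^ n * (a * I ^ k) := by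
  have h0 : ((-1 : ℂ)) ^ (n - k) * (-1) ^ k = (-1) ^ n := by
    rw [← pow_add, Nat.sub_add_cancel hk]
  have h2 : ((-1 : ℂ)) ^ k * (-1) ^ k = 1 := by rw [← mul_pow]; norm_num
  have hm : ((-1 : ℂ)) ^ (n - k) = (-1) ^ n * (-1) ^ k := by
    calc ((-1 : ℂ)) ^ (n - k) = (-1) ^ (n - k) * ((-1) ^ k * (-1) ^ k) := by rw [h2, mul_one]
      _ = ((-1) ^ (n - k) * (-1) ^ k) * (-1) ^ k := by ring
      _ = (-1) ^ n * (-1) ^ k := by rw [h0]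
  have e1 : ((-I : ℂ)) ^ k = (-1) ^ k * I ^ k := by rw [← neg_one_mul, mul_pow]
  have e2 : ((-I : ℂ) / 2) ^ n = (-1) ^ n * (I / 2) ^ n := by
    rw [neg_div, ← neg_one_mul, mul_pow]
  rw [e1, e2, hm]
  linear_combination ((I / 2) ^ n * a * I ^ k * (-1 : ℂ) ^ n) * h2

/-- The transformed polynomial `q_ω(X) = (i/2)^n Σ p_k (-i)^k (X + 1)^k (X - 1)^{n-k}`. -/
noncomputable def qOmega (p : ℂ[X]) (n : ℕ) : ℂ[X] :=
  C ((I / 2) ^ n) *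
    ∑ k ∈ Finset.range (n + 1), C (p.coeff k * (-I) ^ k) * (X + 1) ^ k * (X - 1) ^ (n - k)

lemma qOmega_reflect (p : ℂ[X]) (n : ℕ)
    (hreal : ∀ k, (p.coeff k).im = 0) :
    Polynomial.reflect n (qOmega p n) = (qOmega p n).map (starRingEnd ℂ) := by
  unfold qOmega
  rw [Polynomial.reflect_C_mul, Polynomial.map_mul, Polynomial.map_C, Polynomial.map_sum,
    reflect_sum']
  rw [Finset.mul_sum, Finset.mul_sum]
  refine Finset.sum_congr rfl fun k hk => ?_
  have hk' : k ≤ n := Nat.lt_succ_iff.mp (Finset.mem_range.mp hk)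
  have hsplit : n = k + (n - k) := (Nat.add_sub_cancel' hk').symm
  rw [mul_assoc, Polynomial.reflect_C_mul]
  rw [show Polynomial.reflect n (((X : ℂ[X]) + 1) ^ k * ((X : ℂ[X]) - 1) ^ (n - k))
      = Polynomial.reflect (k + (n - k)) (((X : ℂ[X]) + 1) ^ k * ((X : ℂ[X]) - 1) ^ (n - k))
      from by rw [← hsplit]]
  rw [Polynomial.reflect_mul _ _ (natDeg_Xp1_pow k) (natDeg_Xm1_pow (n - k)),
    reflect_Xp1_pow, reflect_Xm1_pow]
  rw [Polynomial.map_mul, Polynomial.map_mul, Polynomial.map_C, Polynomial.map_pow,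
    Polynomial.map_pow, Polynomial.map_add, Polynomial.map_sub, Polynomial.map_X,
    Polynomial.map_one]
  have hconj : (starRingEnd ℂ) (p.coeff k) = p.coeff k :=
    Complex.conj_eq_iff_im.mpr (hreal k)
  have hc1 : (starRingEnd ℂ) ((I / 2) ^ n) = (-I / 2) ^ n := by
    rw [map_pow, map_div₀, Complex.conj_I, Complex.conj_ofNat]
  have hc2 : (starRingEnd ℂ) (p.coeff k * (-I) ^ k) = p.coeff k * I ^ k := by
    rw [map_mul, hconj, map_pow, map_neg, Complex.conj_I, neg_neg]
  have h1 : ((1 : ℂ[X]) - X) ^ (n - k) = C ((-1 : ℂ) ^ (n - k)) * (X - 1) ^ (n - k) := by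
    rw [show (1 : ℂ[X]) - X = -1 * (X - 1) from by ring, mul_pow]
    simp
  rw [hc1, hc2, h1]
  rw [show C ((I / 2) ^ n) * (C (p.coeff k * (-I) ^ k) *
        ((X + 1) ^ k * (C ((-1 : ℂ) ^ (n - k)) * (X - 1) ^ (n - k))))
      = C ((I / 2) ^ n * (p.coeff k * (-I) ^ k) * (-1 : ℂ) ^ (n - k)) *
        ((X + 1) ^ k * (X - 1) ^ (n - k)) from by
        simp only [Polynomial.C_mul]; ring]
  rw [scal n k hk' (p.coeff k), Polynomial.C_mul]
  ring

theorem qOmega_selfAdjoint (p : ℂ[X]) (n : ℕ) (hn : p.natDegree = n)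
    (hreal : ∀ k, (p.coeff k).im = 0) :
    ∀ k ≤ n, (qOmega p n).coeff (n - k) = (starRingEnd ℂ) ((qOmega p n).coeff k) := by
  intro k hk
  have key := qOmega_reflect p n hreal
  have h := congrArg (fun r : ℂ[X] => r.coeff k) key
  simpa [Polynomial.coeff_reflect, Polynomial.revAt_le hk, Polynomial.coeff_map] using h
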